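/- There exist constants c, C > 0 depending only on p (and the dimensions n, N) such that for every κ ≥ 0 and all matrices ξ₁, ξ₂ ∈ ℝ^{n×N} one has c·|V(ξ₁) − V(ξ₂)|² ≤ (S(ξ₁) − S(ξ₂)) : (ξ₁ − ξ₂) ≤ C·|V(ξ₁) − V(ξ₂)|². -/

import Mathlib

open scoped RealInnerProductSpace

/-- The nonlinear operator `S(ξ) = (κ + |ξ|)^(p-2) ξ` on `n × N` real matrices,
equipped with the Frobenius (Euclidean) norm; for `κ = 0` and `ξ = 0` the value is `0`. -/
noncomputable def Sop (n N : ℕ) (p κ : ℝ) (ξ : EuclideanSpace ℝ (Fin n × Fin N)) :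
    EuclideanSpace ℝ (Fin n × Fin N) :=
  ((κ + ‖ξ‖) ^ (p - 2)) • ξ

/-- The nonlinear operator `V(ξ) = (κ + |ξ|)^((p-2)/2) ξ`. -/
noncomputable def Vop (n N : ℕ) (p κ : ℝ) (ξ : EuclideanSpace ℝ (Fin n × Fin N)) :
    EuclideanSpace ℝ (Fin n × Fin N) :=
  ((κ + ‖ξ‖) ^ ((p - 2) / 2)) • ξ

open Real

open Real in
/-- Tangent bound at the larger point, `1 ≤ α`. -/
lemma VC.tangent_hi {α u v b : ℝ} (hα : 1 ≤ α) (hv : 0 ≤ v) (hvu : v ≤ u)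
    (hb0 : 0 ≤ b) (hbu : b ≤ u) :
    (u ^ α - v ^ α) * b ≤ α * (u ^ α * (u - v)) := by
  rcases eq_or_lt_of_le (hv.trans hvu) with hu | hu
  · have hv0 : v = 0 := le_antisymm (hvu.trans hu.symm.le) hv
    have hb' : b = 0 := le_antisymm (hbu.trans hu.symm.le) hb0
    simp [← hu, hv0, hb']
  · set r : ℝ := v / u with hr
    have hr0 : 0 ≤ r := div_nonneg hv hu.le
    have hr1 : r ≤ 1 := (div_le_one hu).2 hvu
    have hbern : 1 + α * (r - 1) ≤ (1 + (r - 1)) ^ α :=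
      one_add_mul_self_le_rpow_one_add (by linarith) hα
    rw [show (1 : ℝ) + (r - 1) = r by ring] at hbern
    -- so 1 - r^α ≤ α * (1 - r)
    have h1 : 1 - r ^ α ≤ α * (1 - r) := by linarith
    have hvα : v ^ α = u ^ α * r ^ α := by
      rw [← Real.mul_rpow hu.le hr0, mul_div_cancel₀ _ hu.ne']
    have huα : 0 ≤ u ^ α := Real.rpow_nonneg hu.le _
    have hrα1 : r ^ α ≤ 1 := Real.rpow_le_one hr0 hr1 (by linarith)
    -- (1 - r^α) * b ≤ α (1-r) * u
    have h2 : (1 - r ^ α) * b ≤ (α * (1 - r)) * u := by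
      calc (1 - r ^ α) * b ≤ (α * (1 - r)) * b := by
            apply mul_le_mul_of_nonneg_right h1 hb0
        _ ≤ (α * (1 - r)) * u :=
            mul_le_mul_of_nonneg_left hbu (by nlinarith)
    have h3 : u ^ α * ((1 - r ^ α) * b) ≤ u ^ α * ((α * (1 - r)) * u) :=
      mul_le_mul_of_nonneg_left h2 huα
    have hru : u * (1 - r) = u - v := by rw [hr, mul_sub, mul_div_cancel₀ _ hu.ne']; ring
    calc (u ^ α - v ^ α) * b = u ^ α * ((1 - r ^ α) * b) := by rw [hvα]; ring
      _ ≤ u ^ α * ((α * (1 - r)) * u) := h3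
      _ = α * (u ^ α * (u * (1 - r))) := by ring
      _ = α * (u ^ α * (u - v)) := by rw [hru]

/-- Tangent bound at the smaller point, `0 ≤ α ≤ 1`. -/
lemma VC.tangent_lo {α u v : ℝ} (hα0 : 0 ≤ α) (hα1 : α ≤ 1) (hv : 0 ≤ v) (hvu : v ≤ u) :
    (u ^ α - v ^ α) * v ≤ α * (v ^ α * (u - v)) := by
  rcases eq_or_lt_of_le hv with hv0 | hv0
  · simp only [← hv0, sub_zero, mul_zero]
    exact mul_nonneg hα0 (mul_nonneg (Real.rpow_nonneg le_rfl _) (by linarith))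
  · set s : ℝ := (u - v) / v with hs
    have hs0 : 0 ≤ s := div_nonneg (by linarith) hv0.le
    have hbern : (1 + s) ^ α ≤ 1 + α * s :=
      rpow_one_add_le_one_add_mul_self (by linarith) hα0 hα1
    have h1s : 1 + s = u / v := by
      rw [hs, eq_div_iff hv0.ne', add_mul, div_mul_cancel₀ _ hv0.ne']; ring
    have huv : (u / v) ^ α = u ^ α / v ^ α := Real.div_rpow (hv0.le.trans hvu) hv0.le α
    rw [h1s, huv] at hbern
    have hvα : 0 < v ^ α := Real.rpow_pos_of_pos hv0 _
    -- u^α ≤ v^α + α s v^α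
    have h2 : u ^ α ≤ v ^ α * (1 + α * s) := by
      rw [div_le_iff₀ hvα] at hbern; linarith [hbern]
    have hsv : s * v = u - v := by rw [hs, div_mul_cancel₀ _ hv0.ne']
    calc (u ^ α - v ^ α) * v ≤ (v ^ α * (1 + α * s) - v ^ α) * v := by nlinarith
      _ = α * (v ^ α * (s * v)) := by ring
      _ = α * (v ^ α * (u - v)) := by rw [hsv]

/-- Core comparison: for `α > -1`, `0 ≤ b ≤ x`, `κ ≥ 0`,
`(κ+x)^α x - (κ+b)^α b` is comparable to `(κ+x)^α (x-b)`. -/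
lemma VC.key_ratio {α : ℝ} (hα : -1 < α) {κ b x : ℝ} (hκ : 0 ≤ κ) (hb : 0 ≤ b)
    (hbx : b ≤ x) :
    min 1 (α + 1) * ((κ + x) ^ α * (x - b)) ≤ (κ + x) ^ α * x - (κ + b) ^ α * b ∧
    (κ + x) ^ α * x - (κ + b) ^ α * b ≤ max 1 (α + 1) * ((κ + x) ^ α * (x - b)) := by
  set u : ℝ := κ + x with hu
  set v : ℝ := κ + b with hv
  have hx : 0 ≤ x := hb.trans hbx
  have hv0 : 0 ≤ v := by positivity
  have hvu : v ≤ u := by show κ + b ≤ κ + x; linarith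
  have hbu : b ≤ u := by show b ≤ κ + x; linarith
  have hbv : b ≤ v := by show b ≤ κ + b; linarith
  have huα : 0 ≤ u ^ α := Real.rpow_nonneg (by positivity) _
  have hM : 0 ≤ u ^ α * (x - b) := mul_nonneg huα (by linarith)
  have hmin : min 1 (α + 1) ≤ 1 := min_le_left _ _
  have hmin0 : 0 < min 1 (α + 1) := lt_min one_pos (by linarith)
  have huv : u - v = x - b := by show κ + x - (κ + b) = x - b; ring
  -- identity: u^α x - v^α b = u^α (x-b) + (u^α - v^α) * b
  have hid : u ^ α * x - v ^ α * b = u ^ α * (x - b) + (u ^ α - v ^ α) * b := by ring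
  rcases le_or_gt 0 α with hα0 | hα0
  · -- α ≥ 0 : u^α ≥ v^α
    have hmono : v ^ α ≤ u ^ α := Real.rpow_le_rpow hv0 hvu hα0
    constructor
    · have : (0:ℝ) ≤ (u ^ α - v ^ α) * b := mul_nonneg (by linarith) hb
      nlinarith [mul_le_mul_of_nonneg_right hmin hM]
    · have hkey : (u ^ α - v ^ α) * b ≤ α * (u ^ α * (u - v)) := by
        rcases le_or_gt 1 α with h1 | h1
        · exact VC.tangent_hi h1 hv0 hvu hb hbu
        · calc (u ^ α - v ^ α) * b ≤ (u ^ α - v ^ α) * v :=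
                mul_le_mul_of_nonneg_left hbv (by linarith)
            _ ≤ α * (v ^ α * (u - v)) := VC.tangent_lo hα0 h1.le hv0 hvu
            _ ≤ α * (u ^ α * (u - v)) := by
                apply mul_le_mul_of_nonneg_left _ hα0
                apply mul_le_mul_of_nonneg_right hmono (by linarith)
      have hmax : α + 1 ≤ max 1 (α + 1) := le_max_right _ _
      rw [huv] at hkey
      nlinarith [mul_le_mul_of_nonneg_right hmax hM]
  · -- -1 < α < 0
    rcases eq_or_lt_of_le hv0 with hveq | hvpos
    · -- v = 0 forces κ = 0 and b = 0
      have hκ0 : κ = 0 := by simp [hv] at hveq; linarith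
      have hb0 : b = 0 := by simp [hv] at hveq; linarith
      subst hκ0; subst hb0
      constructor
      · nlinarith [mul_le_mul_of_nonneg_right hmin hM]
      · have hmax1 : (1:ℝ) ≤ max 1 (α + 1) := le_max_left _ _
        nlinarith [mul_le_mul_of_nonneg_right hmax1 hM]
    · set β : ℝ := -α with hβ
      have hβ0 : 0 < β := by simp [hβ]; linarith
      have hβ1 : β < 1 := by simp [hβ]; linarith
      have hupos : 0 < u := lt_of_lt_of_le hvpos hvu
      have hmono : u ^ α ≤ v ^ α := Real.rpow_le_rpow_of_nonpos hvpos hvu (by linarith)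
      constructor
      · -- lower: (v^α - u^α) b ≤ β u^α (u - v)
        have htan : (u ^ β - v ^ β) * v ≤ β * (v ^ β * (u - v)) :=
          VC.tangent_lo hβ0.le hβ1.le hv0 hvu
        have hβmono : v ^ β ≤ u ^ β := Real.rpow_le_rpow hv0 hvu hβ0.le
        have htan' : (u ^ β - v ^ β) * b ≤ β * (v ^ β * (u - v)) := by
          calc (u ^ β - v ^ β) * b ≤ (u ^ β - v ^ β) * v :=
                mul_le_mul_of_nonneg_left hbv (by linarith)
            _ ≤ β * (v ^ β * (u - v)) := htan
        -- identity: v^α - u^α = (u^β - v^β) * (u^α * v^α)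
        have huu : u ^ α * u ^ β = 1 := by
          rw [← Real.rpow_add hupos]; simp [hβ]
        have hvv : v ^ α * v ^ β = 1 := by
          rw [← Real.rpow_add hvpos]; simp [hβ]
        have hid2 : v ^ α - u ^ α = (u ^ β - v ^ β) * (u ^ α * v ^ α) := by
          linear_combination (-(v ^ α)) * huu + u ^ α * hvv
        have huαv : 0 ≤ u ^ α * v ^ α :=
          mul_nonneg huα (Real.rpow_nonneg hv0 _)
        have h3 : (v ^ α - u ^ α) * b ≤ β * (v ^ β * (u - v)) * (u ^ α * v ^ α) := by
          rw [hid2]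
          calc (u ^ β - v ^ β) * (u ^ α * v ^ α) * b
              = ((u ^ β - v ^ β) * b) * (u ^ α * v ^ α) := by ring
            _ ≤ β * (v ^ β * (u - v)) * (u ^ α * v ^ α) :=
                mul_le_mul_of_nonneg_right htan' huαv
        have h4 : β * (v ^ β * (u - v)) * (u ^ α * v ^ α) = β * (u ^ α * (u - v)) := by
          linear_combination β * (u - v) * u ^ α * hvv
        rw [h4] at h3
        -- now: u^α x - v^α b = u^α (x-b) - (v^α - u^α) b ≥ u^α(x-b) - β u^α (x-b)
        have hminle : min 1 (α + 1) ≤ α + 1 := min_le_right _ _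
        have : (v ^ α - u ^ α) * b ≤ β * (u ^ α * (x - b)) := by rw [← huv]; exact h3
        have hβeq : (1 : ℝ) - β = α + 1 := by simp [hβ]; ring
        nlinarith [mul_le_mul_of_nonneg_right hminle hM]
      · -- upper: (u^α - v^α) b ≤ 0
        have h0 : (u ^ α - v ^ α) * b ≤ 0 :=
          mul_nonpos_of_nonpos_of_nonneg (by linarith) hb
        have hmax1 : (1:ℝ) ≤ max 1 (α + 1) := le_max_left _ _
        nlinarith [mul_le_mul_of_nonneg_right hmax1 hM]

noncomputable def VC.cc (p : ℝ) : ℝ := min 1 (min 1 (p - 1) / (max 1 (p / 2)) ^ 2)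
noncomputable def VC.CC (p : ℝ) : ℝ := max 3 (max 1 (p - 1) / (min 1 (p / 2)) ^ 2)

lemma VC.cc_pos {p : ℝ} (hp : 1 < p) : 0 < VC.cc p := by
  have h1 : (0:ℝ) < min 1 (p - 1) := lt_min one_pos (by linarith)
  have h2 : (0:ℝ) < max 1 (p / 2) := lt_max_of_lt_left one_pos
  exact lt_min one_pos (by positivity)

lemma VC.CC_pos {p : ℝ} (hp : 1 < p) : 0 < VC.CC p :=
  lt_max_of_lt_left (by norm_num)

lemma VC.sq_rpow_half {w : ℝ} (hw : 0 ≤ w) (p : ℝ) :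
    (w ^ ((p - 2) / 2)) ^ 2 = w ^ (p - 2) := by
  rw [← Real.rpow_natCast (w ^ ((p - 2) / 2)) 2, ← Real.rpow_mul hw]
  norm_num

/-- Same-sign scalar case: `0 ≤ y ≤ x`. -/
lemma VC.scalar_same {p : ℝ} (hp : 1 < p) {κ : ℝ} (hκ : 0 ≤ κ) {x y : ℝ}
    (hy : 0 ≤ y) (hxy : y ≤ x) :
    VC.cc p * ((κ + x) ^ ((p - 2) / 2) * x - (κ + y) ^ ((p - 2) / 2) * y) ^ 2
        ≤ ((κ + x) ^ (p - 2) * x - (κ + y) ^ (p - 2) * y) * (x - y) ∧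
    ((κ + x) ^ (p - 2) * x - (κ + y) ^ (p - 2) * y) * (x - y)
        ≤ VC.CC p * ((κ + x) ^ ((p - 2) / 2) * x - (κ + y) ^ ((p - 2) / 2) * y) ^ 2 := by
  have hx : 0 ≤ x := hy.trans hxy
  have h1 := VC.key_ratio (α := p - 2) (by linarith) hκ hy hxy
  have h2 := VC.key_ratio (α := (p - 2) / 2) (by linarith) hκ hy hxy
  rw [show p - 2 + 1 = p - 1 by ring] at h1
  rw [show (p - 2) / 2 + 1 = p / 2 by ring] at h2
  obtain ⟨h1l, h1r⟩ := h1
  obtain ⟨h2l, h2r⟩ := h2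
  set cα : ℝ := min 1 (p - 1) with hcαdef
  set Cα : ℝ := max 1 (p - 1) with hCαdef
  set cq : ℝ := min 1 (p / 2) with hcqdef
  set Cq : ℝ := max 1 (p / 2) with hCqdef
  have hcα : 0 < cα := lt_min one_pos (by linarith)
  have hCα : 0 < Cα := lt_max_of_lt_left one_pos
  have hcq : 0 < cq := lt_min one_pos (by linarith)
  have hCq : 0 < Cq := lt_max_of_lt_left one_pos
  set U : ℝ := (κ + x) ^ (p - 2) with hUdef
  set Uq : ℝ := (κ + x) ^ ((p - 2) / 2) with hUqdef
  set Vq : ℝ := (κ + y) ^ ((p - 2) / 2) with hVqdef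
  set V : ℝ := (κ + y) ^ (p - 2) with hVdef
  have hUq2 : Uq ^ 2 = U := VC.sq_rpow_half (by linarith) p
  have hU0 : 0 ≤ U := Real.rpow_nonneg (by linarith) _
  have hUq0 : 0 ≤ Uq := Real.rpow_nonneg (by linarith) _
  set E : ℝ := Uq * x - Vq * y with hEdef
  set Δ : ℝ := U * x - V * y with hΔdef
  have hxy' : 0 ≤ x - y := by linarith
  have hMq : 0 ≤ Uq * (x - y) := mul_nonneg hUq0 hxy'
  have hM2 : 0 ≤ U * (x - y) ^ 2 := mul_nonneg hU0 (sq_nonneg _)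
  have hE0 : 0 ≤ E := le_trans (mul_nonneg hcq.le hMq) h2l
  have hE2up : E ^ 2 ≤ Cq ^ 2 * (U * (x - y) ^ 2) := by
    calc E ^ 2 ≤ (Cq * (Uq * (x - y))) ^ 2 := pow_le_pow_left₀ hE0 h2r 2
      _ = Cq ^ 2 * (Uq ^ 2 * (x - y) ^ 2) := by ring
      _ = Cq ^ 2 * (U * (x - y) ^ 2) := by rw [hUq2]
  have hE2lo : cq ^ 2 * (U * (x - y) ^ 2) ≤ E ^ 2 := by
    calc cq ^ 2 * (U * (x - y) ^ 2) = (cq * (Uq * (x - y))) ^ 2 := by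
          rw [← hUq2]; ring
      _ ≤ E ^ 2 := pow_le_pow_left₀ (mul_nonneg hcq.le hMq) h2l 2
  have hPlo : cα * (U * (x - y) ^ 2) ≤ Δ * (x - y) := by
    calc cα * (U * (x - y) ^ 2) = cα * (U * (x - y)) * (x - y) := by ring
      _ ≤ Δ * (x - y) := mul_le_mul_of_nonneg_right h1l hxy'
  have hPup : Δ * (x - y) ≤ Cα * (U * (x - y) ^ 2) := by
    calc Δ * (x - y) ≤ Cα * (U * (x - y)) * (x - y) :=
          mul_le_mul_of_nonneg_right h1r hxy'
      _ = Cα * (U * (x - y) ^ 2) := by ring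
  constructor
  · have hccle : VC.cc p * Cq ^ 2 ≤ cα := by
      have : VC.cc p ≤ cα / Cq ^ 2 := min_le_right _ _
      calc VC.cc p * Cq ^ 2 ≤ cα / Cq ^ 2 * Cq ^ 2 :=
            mul_le_mul_of_nonneg_right this (by positivity)
        _ = cα := div_mul_cancel₀ _ (by positivity)
    calc VC.cc p * E ^ 2 ≤ VC.cc p * (Cq ^ 2 * (U * (x - y) ^ 2)) :=
          mul_le_mul_of_nonneg_left hE2up (VC.cc_pos hp).le
      _ = VC.cc p * Cq ^ 2 * (U * (x - y) ^ 2) := by ring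
      _ ≤ cα * (U * (x - y) ^ 2) := mul_le_mul_of_nonneg_right hccle hM2
      _ ≤ Δ * (x - y) := hPlo
  · have hCCge : Cα ≤ VC.CC p * cq ^ 2 := by
      have : Cα / cq ^ 2 ≤ VC.CC p := le_max_right _ _
      calc Cα = Cα / cq ^ 2 * cq ^ 2 := (div_mul_cancel₀ _ (by positivity)).symm
        _ ≤ VC.CC p * cq ^ 2 := mul_le_mul_of_nonneg_right this (by positivity)
    calc Δ * (x - y) ≤ Cα * (U * (x - y) ^ 2) := hPup
      _ ≤ VC.CC p * cq ^ 2 * (U * (x - y) ^ 2) := mul_le_mul_of_nonneg_right hCCge hM2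
      _ = VC.CC p * (cq ^ 2 * (U * (x - y) ^ 2)) := by ring
      _ ≤ VC.CC p * E ^ 2 := mul_le_mul_of_nonneg_left hE2lo (VC.CC_pos hp).le



/-- Opposite-sign scalar case: `0 ≤ b ≤ x` with second argument `-b`. -/
lemma VC.scalar_opp {p : ℝ} (hp : 1 < p) {κ : ℝ} (hκ : 0 ≤ κ) {x b : ℝ}
    (hb : 0 ≤ b) (hbx : b ≤ x) :
    VC.cc p * ((κ + x) ^ ((p - 2) / 2) * x + (κ + b) ^ ((p - 2) / 2) * b) ^ 2
        ≤ ((κ + x) ^ (p - 2) * x + (κ + b) ^ (p - 2) * b) * (x + b) ∧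
    ((κ + x) ^ (p - 2) * x + (κ + b) ^ (p - 2) * b) * (x + b)
        ≤ VC.CC p * ((κ + x) ^ ((p - 2) / 2) * x + (κ + b) ^ ((p - 2) / 2) * b) ^ 2 := by
  have hx : 0 ≤ x := hb.trans hbx
  set U : ℝ := (κ + x) ^ (p - 2) with hUdef
  set Uq : ℝ := (κ + x) ^ ((p - 2) / 2) with hUqdef
  set Bq : ℝ := (κ + b) ^ ((p - 2) / 2) with hBqdef
  set V : ℝ := (κ + b) ^ (p - 2) with hVdef
  have hUq2 : Uq ^ 2 = U := VC.sq_rpow_half (by linarith) p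
  have hBq2 : Bq ^ 2 = V := VC.sq_rpow_half (by linarith) p
  have hU0 : 0 ≤ U := Real.rpow_nonneg (by linarith) _
  have hV0 : 0 ≤ V := Real.rpow_nonneg (by linarith) _
  have hUq0 : 0 ≤ Uq := Real.rpow_nonneg (by linarith) _
  have hBq0 : 0 ≤ Bq := Real.rpow_nonneg (by linarith) _
  -- monotonicity: V * b ≤ U * x
  have hmono : V * b ≤ U * x := by
    have h := (VC.key_ratio (α := p - 2) (by linarith) hκ hb hbx).1
    have hm0 : 0 < min 1 (p - 2 + 1) := lt_min one_pos (by linarith)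
    nlinarith [mul_nonneg hU0 (sub_nonneg.2 hbx)]
  have hQ0 : 0 ≤ (Uq * x + Bq * b) ^ 2 := sq_nonneg _
  have hQexp : (Uq * x + Bq * b) ^ 2 = U * x ^ 2 + 2 * (Uq * Bq) * (x * b) + V * b ^ 2 := by
    rw [← hUq2, ← hBq2]; ring
  have hAM : 2 * (Uq * Bq) * (x * b) ≤ (U + V) * (x * b) := by
    apply mul_le_mul_of_nonneg_right _ (mul_nonneg hx hb)
    nlinarith [sq_nonneg (Uq - Bq)]
  have hUxb : U * x * b ≤ U * x * x := mul_le_mul_of_nonneg_left hbx (mul_nonneg hU0 hx)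
  have hVbx : V * b * x ≤ U * x * x := mul_le_mul_of_nonneg_right hmono hx
  have hcross : 0 ≤ Uq * Bq * (x * b) :=
    mul_nonneg (mul_nonneg hUq0 hBq0) (mul_nonneg hx hb)
  have hVb2 : 0 ≤ V * b ^ 2 := mul_nonneg hV0 (sq_nonneg b)
  have hQP : (Uq * x + Bq * b) ^ 2 ≤ (U * x + V * b) * (x + b) := by
    rw [hQexp]; nlinarith [hAM]
  have hP3Q : (U * x + V * b) * (x + b) ≤ 3 * (Uq * x + Bq * b) ^ 2 := by
    rw [hQexp]; nlinarith [hUxb, hVbx, hcross, hVb2]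
  constructor
  · have hc1 : VC.cc p ≤ 1 := min_le_left _ _
    calc VC.cc p * (Uq * x + Bq * b) ^ 2 ≤ 1 * (Uq * x + Bq * b) ^ 2 :=
          mul_le_mul_of_nonneg_right hc1 hQ0
      _ = (Uq * x + Bq * b) ^ 2 := one_mul _
      _ ≤ (U * x + V * b) * (x + b) := hQP
  · have hC3 : (3:ℝ) ≤ VC.CC p := le_max_left _ _
    calc (U * x + V * b) * (x + b) ≤ 3 * (Uq * x + Bq * b) ^ 2 := hP3Q
      _ ≤ VC.CC p * (Uq * x + Bq * b) ^ 2 := mul_le_mul_of_nonneg_right hC3 hQ0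

/-- Scalar two-sided estimate assuming `|y| ≤ x`. -/
lemma VC.scalar_key {p : ℝ} (hp : 1 < p) {κ : ℝ} (hκ : 0 ≤ κ) {x y : ℝ}
    (hxy : |y| ≤ x) :
    VC.cc p * ((κ + |x|) ^ ((p - 2) / 2) * x - (κ + |y|) ^ ((p - 2) / 2) * y) ^ 2
        ≤ ((κ + |x|) ^ (p - 2) * x - (κ + |y|) ^ (p - 2) * y) * (x - y) ∧
    ((κ + |x|) ^ (p - 2) * x - (κ + |y|) ^ (p - 2) * y) * (x - y)
        ≤ VC.CC p * ((κ + |x|) ^ ((p - 2) / 2) * x - (κ + |y|) ^ ((p - 2) / 2) * y) ^ 2 := by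
  have hx : 0 ≤ x := (abs_nonneg y).trans hxy
  rw [abs_of_nonneg hx]
  rcases le_or_gt 0 y with hy | hy
  · rw [abs_of_nonneg hy]
    exact VC.scalar_same hp hκ hy (by rwa [abs_of_nonneg hy] at hxy)
  · rw [abs_of_neg hy]
    have hb : 0 ≤ -y := by linarith
    have hbx : -y ≤ x := by rwa [abs_of_neg hy] at hxy
    obtain ⟨hl, hr⟩ := VC.scalar_opp hp hκ hb hbx
    have e1 : ((κ + x) ^ (p - 2) * x + (κ + -y) ^ (p - 2) * -y) * (x + -y)
        = ((κ + x) ^ (p - 2) * x - (κ + -y) ^ (p - 2) * y) * (x - y) := by ring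
    have e2 : ((κ + x) ^ ((p - 2) / 2) * x + (κ + -y) ^ ((p - 2) / 2) * -y) ^ 2
        = ((κ + x) ^ ((p - 2) / 2) * x - (κ + -y) ^ ((p - 2) / 2) * y) ^ 2 := by ring
    rw [e1, e2] at hl hr
    exact ⟨hl, hr⟩

/-- Scalar two-sided estimate for all real `x`, `y`. -/
lemma VC.scalar_all {p : ℝ} (hp : 1 < p) {κ : ℝ} (hκ : 0 ≤ κ) (x y : ℝ) :
    VC.cc p * ((κ + |x|) ^ ((p - 2) / 2) * x - (κ + |y|) ^ ((p - 2) / 2) * y) ^ 2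
        ≤ ((κ + |x|) ^ (p - 2) * x - (κ + |y|) ^ (p - 2) * y) * (x - y) ∧
    ((κ + |x|) ^ (p - 2) * x - (κ + |y|) ^ (p - 2) * y) * (x - y)
        ≤ VC.CC p * ((κ + |x|) ^ ((p - 2) / 2) * x - (κ + |y|) ^ ((p - 2) / 2) * y) ^ 2 := by
  rcases le_total |y| |x| with hcase | hcase
  · rcases le_or_gt 0 x with hx | hx
    · exact VC.scalar_key hp hκ (hcase.trans_eq (abs_of_nonneg hx))
    · have h : |-y| ≤ -x := by rw [abs_neg]; calc |y| ≤ |x| := hcase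
        _ = -x := abs_of_neg hx
      obtain ⟨hl, hr⟩ := VC.scalar_key hp hκ (x := -x) (y := -y) h
      rw [abs_neg, abs_neg] at hl hr
      have e1 : ((κ + |x|) ^ (p - 2) * -x - (κ + |y|) ^ (p - 2) * -y) * (-x - -y)
          = ((κ + |x|) ^ (p - 2) * x - (κ + |y|) ^ (p - 2) * y) * (x - y) := by ring
      have e2 : ((κ + |x|) ^ ((p - 2) / 2) * -x - (κ + |y|) ^ ((p - 2) / 2) * -y) ^ 2
          = ((κ + |x|) ^ ((p - 2) / 2) * x - (κ + |y|) ^ ((p - 2) / 2) * y) ^ 2 := by ring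
      rw [e1, e2] at hl hr
      exact ⟨hl, hr⟩
  · rcases le_or_gt 0 y with hy | hy
    · obtain ⟨hl, hr⟩ := VC.scalar_key hp hκ (x := y) (y := x)
        (hcase.trans_eq (abs_of_nonneg hy))
      have e1 : ((κ + |y|) ^ (p - 2) * y - (κ + |x|) ^ (p - 2) * x) * (y - x)
          = ((κ + |x|) ^ (p - 2) * x - (κ + |y|) ^ (p - 2) * y) * (x - y) := by ring
      have e2 : ((κ + |y|) ^ ((p - 2) / 2) * y - (κ + |x|) ^ ((p - 2) / 2) * x) ^ 2
          = ((κ + |x|) ^ ((p - 2) / 2) * x - (κ + |y|) ^ ((p - 2) / 2) * y) ^ 2 := by ring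
      rw [e1, e2] at hl hr
      exact ⟨hl, hr⟩
    · have h : |-x| ≤ -y := by rw [abs_neg]; calc |x| ≤ |y| := hcase
        _ = -y := abs_of_neg hy
      obtain ⟨hl, hr⟩ := VC.scalar_key hp hκ (x := -y) (y := -x) h
      rw [abs_neg, abs_neg] at hl hr
      have e1 : ((κ + |y|) ^ (p - 2) * -y - (κ + |x|) ^ (p - 2) * -x) * (-y - -x)
          = ((κ + |x|) ^ (p - 2) * x - (κ + |y|) ^ (p - 2) * y) * (x - y) := by ring
      have e2 : ((κ + |y|) ^ ((p - 2) / 2) * -y - (κ + |x|) ^ ((p - 2) / 2) * -x) ^ 2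
          = ((κ + |x|) ^ ((p - 2) / 2) * x - (κ + |y|) ^ ((p - 2) / 2) * y) ^ 2 := by ring
      rw [e1, e2] at hl hr
      exact ⟨hl, hr⟩

/-- **V-coercivity.**  There are constants `c, C > 0` depending only on `p` (and `n, N`)
such that for all `κ ≥ 0` and all matrices `ξ₁, ξ₂`,
`c |V(ξ₁) - V(ξ₂)|² ≤ (S(ξ₁) - S(ξ₂)) : (ξ₁ - ξ₂) ≤ C |V(ξ₁) - V(ξ₂)|²`. -/
theorem V_coercivity (n N : ℕ) (hn : 1 ≤ n) (hN : 1 ≤ N) (p : ℝ) (hp : 1 < p) :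
    ∃ c > (0 : ℝ), ∃ C > (0 : ℝ),
      ∀ κ : ℝ, 0 ≤ κ →
        ∀ ξ₁ ξ₂ : EuclideanSpace ℝ (Fin n × Fin N),
          c * ‖Vop n N p κ ξ₁ - Vop n N p κ ξ₂‖ ^ 2
              ≤ ⟪Sop n N p κ ξ₁ - Sop n N p κ ξ₂, ξ₁ - ξ₂⟫ ∧
          ⟪Sop n N p κ ξ₁ - Sop n N p κ ξ₂, ξ₁ - ξ₂⟫
              ≤ C * ‖Vop n N p κ ξ₁ - Vop n N p κ ξ₂‖ ^ 2 := by
  refine ⟨VC.cc p, VC.cc_pos hp, VC.CC p, VC.CC_pos hp, fun κ hκ ξ₁ ξ₂ => ?_⟩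
  set a : ℝ := ‖ξ₁‖ with ha
  set b : ℝ := ‖ξ₂‖ with hb
  set t : ℝ := ⟪ξ₁, ξ₂⟫ with htdef
  have ha0 : 0 ≤ a := norm_nonneg _
  have hb0 : 0 ≤ b := norm_nonneg _
  set fa : ℝ := (κ + a) ^ (p - 2) with hfa
  set fb : ℝ := (κ + b) ^ (p - 2) with hfb
  set ga : ℝ := (κ + a) ^ ((p - 2) / 2) with hga
  set gb : ℝ := (κ + b) ^ ((p - 2) / 2) with hgb
  have hga2 : ga ^ 2 = fa := VC.sq_rpow_half (by linarith) p
  have hgb2 : gb ^ 2 = fb := VC.sq_rpow_half (by linarith) p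
  -- expansion of the inner product
  have E1 : ⟪Sop n N p κ ξ₁ - Sop n N p κ ξ₂, ξ₁ - ξ₂⟫
      = fa * a ^ 2 + fb * b ^ 2 - (fa + fb) * t := by
    have hc : (inner ℝ ξ₂ ξ₁ : ℝ) = t := (real_inner_comm ξ₁ ξ₂).trans htdef.symm
    simp only [Sop, inner_sub_left, inner_sub_right, real_inner_smul_left]
    simp only [real_inner_self_eq_norm_sq, hc, ← ha, ← hb, ← htdef, ← hfa, ← hfb]
    ring
  -- expansion of the norm square
  have E2 : ‖Vop n N p κ ξ₁ - Vop n N p κ ξ₂‖ ^ 2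
      = fa * a ^ 2 + fb * b ^ 2 - 2 * (ga * gb) * t := by
    rw [← real_inner_self_eq_norm_sq]
    have hc : (inner ℝ ξ₂ ξ₁ : ℝ) = t := (real_inner_comm ξ₁ ξ₂).trans htdef.symm
    simp only [Vop, inner_sub_left, inner_sub_right, real_inner_smul_left,
      real_inner_smul_right]
    simp only [real_inner_self_eq_norm_sq, hc, ← ha, ← hb, ← htdef, ← hga, ← hgb]
    linear_combination a ^ 2 * hga2 + b ^ 2 * hgb2
  -- Cauchy-Schwarz
  have hCS : |t| ≤ a * b := abs_real_inner_le_norm ξ₁ ξ₂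
  obtain ⟨ht1, ht2⟩ := abs_le.mp hCS
  -- scalar estimates at (a, b) and (a, -b)
  have hs := VC.scalar_all hp hκ a b
  rw [abs_of_nonneg ha0, abs_of_nonneg hb0, ← hfa, ← hfb, ← hga, ← hgb] at hs
  have ho := VC.scalar_all hp hκ a (-b)
  rw [abs_of_nonneg ha0, abs_neg, abs_of_nonneg hb0, ← hfa, ← hfb, ← hga, ← hgb] at ho
  obtain ⟨hs1, hs2⟩ := hs
  obtain ⟨ho1, ho2⟩ := ho
  have es : (ga * a - gb * b) ^ 2 = fa * a ^ 2 + fb * b ^ 2 - 2 * (ga * gb) * (a * b) := by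
    linear_combination a ^ 2 * hga2 + b ^ 2 * hgb2
  have es' : (fa * a - fb * b) * (a - b) = fa * a ^ 2 + fb * b ^ 2 - (fa + fb) * (a * b) := by
    ring
  have eo : (ga * a - gb * -b) ^ 2 = fa * a ^ 2 + fb * b ^ 2 + 2 * (ga * gb) * (a * b) := by
    linear_combination a ^ 2 * hga2 + b ^ 2 * hgb2
  have eo' : (fa * a - fb * -b) * (a - -b)
      = fa * a ^ 2 + fb * b ^ 2 + (fa + fb) * (a * b) := by ring
  rw [es, es'] at hs1 hs2
  rw [eo, eo'] at ho1 ho2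
  rw [E1, E2]
  clear_value a b t fa fb ga gb
  clear E1 E2 ha hb htdef hfa hfb hga hgb
  constructor
  · rcases le_total 0 ((fa + fb) - VC.cc p * (2 * (ga * gb))) with hsgn | hsgn
    · have hst := mul_le_mul_of_nonneg_left ht2 hsgn
      linarith [hs1, hst]
    · have hst := mul_le_mul_of_nonpos_left ht1 hsgn
      linarith [ho1, hst]
  · rcases le_total 0 (VC.CC p * (2 * (ga * gb)) - (fa + fb)) with hsgn | hsgn
    · have hst := mul_le_mul_of_nonneg_left ht2 hsgn
      linarith [hs2, hst]
    · have hst := mul_le_mul_of_nonpos_left ht1 hsgn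
      linarith [ho2, hst]
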